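/- Let p ≥ 1, let s > 0 be an integer, λ > 0, and let g : ℝⁿ → [0,∞) be an s-concave integrable function whose support has nonempty interior and contains the origin. Set f = λ ×_{p,s} g. Then the limit S̃_{p,s}(f; g) = (p/(n+s)) · lim_{ε→0⁺} ( ∫ [f ⊕_{p,s} (ε ×_{p,s} g)] − ∫ f ) / ε exists and equals (∫ f)^{1 − p/(n+s)} (∫ g)^{p/(n+s)} = λ^{(n+s)/p − 1} ∫ g. -/

import Mathlib

open MeasureTheory Set Function
open scoped Classical ENNReal

noncomputable section

abbrev En (n : ℕ) := EuclideanSpace ℝ (Fin n)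

def fsupp {n : ℕ} (f : En n → ℝ) : Set (En n) := closure (Function.support f)

def MAdd {E : Type*} [AddCommMonoid E] [Module ℝ E] (M : Set (ℝ × ℝ)) (K L : Set E) :
    Set E :=
  {z | ∃ ab ∈ M, ∃ x ∈ K, ∃ y ∈ L, z = ab.1 • x + ab.2 • y}

def oplusM {n : ℕ} (M : Set (ℝ × ℝ)) (s : ℝ) (f g : En n → ℝ) : En n → ℝ := fun z =>
  if z ∈ MAdd M (fsupp f) (fsupp g) then
    sSup {r | ∃ ab ∈ M, ∃ x ∈ fsupp f, ∃ y ∈ fsupp g,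
      z = ab.1 • x + ab.2 • y ∧ r = (ab.1 * f x ^ s⁻¹ + ab.2 * g y ^ s⁻¹) ^ s}
  else 0

/-- the coefficient set `{((1-t)^{1/q}, t^{1/q}) : t ∈ [0,1]}`, where `1/q = 1 - 1/p`. -/
def Mp (p : ℝ) : Set (ℝ × ℝ) :=
  {ab | ∃ t ∈ Icc (0:ℝ) 1, ab = ((1 - t) ^ (1 - p⁻¹), t ^ (1 - p⁻¹))}

/-- the function `f ⊕_{p,s} g`. -/
def oplusP {n : ℕ} (p s : ℝ) (f g : En n → ℝ) : En n → ℝ := oplusM (Mp p) s f g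

/-- the `L_p` scaling `[λ ×_{p,s} f](x) = λ^{s/p} f(λ^{-1/p} x)`. -/
def lpScale {n : ℕ} (p s l : ℝ) (f : En n → ℝ) : En n → ℝ :=
  fun x => l ^ (s / p) * f ((l ^ (-p⁻¹)) • x)

def IsSConcave {n : ℕ} (s : ℝ) (f : En n → ℝ) : Prop :=
  (fsupp f).Nonempty ∧ IsCompact (fsupp f) ∧ Convex ℝ (fsupp f) ∧
  ConcaveOn ℝ (fsupp f) (fun x => f x ^ s⁻¹)

open scoped Pointwise

lemma holder_ineq {p : ℝ} (hp : 1 ≤ p) {t a b : ℝ} (ht0 : 0 ≤ t) (ht1 : t ≤ 1)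
    (ha : 0 < a) (hb : 0 < b) :
    (1 - t) ^ (1 - p⁻¹) * a ^ (p⁻¹ : ℝ) + t ^ (1 - p⁻¹) * b ^ (p⁻¹ : ℝ) ≤ (a + b) ^ (p⁻¹ : ℝ) := by
  have hp0 : 0 < p := lt_of_lt_of_le one_pos hp
  have hθ0 : (0:ℝ) ≤ p⁻¹ := by positivity
  have hθ1 : p⁻¹ ≤ 1 := by
    rw [← one_div]
    exact div_le_one_of_le₀ hp (by positivity)
  have hab : 0 < a + b := by linarith
  have h1 : (a / (a+b)) ^ (p⁻¹:ℝ) * (1 - t) ^ (1 - p⁻¹) ≤ p⁻¹ * (a/(a+b)) + (1 - p⁻¹) * (1 - t) :=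
    Real.geom_mean_le_arith_mean2_weighted hθ0 (by linarith) (by positivity) (by linarith) (by ring)
  have h2 : (b / (a+b)) ^ (p⁻¹:ℝ) * t ^ (1 - p⁻¹) ≤ p⁻¹ * (b/(a+b)) + (1 - p⁻¹) * t :=
    Real.geom_mean_le_arith_mean2_weighted hθ0 (by linarith) (by positivity) ht0 (by ring)
  have e1 : a ^ (p⁻¹:ℝ) = (a+b) ^ (p⁻¹:ℝ) * (a/(a+b)) ^ (p⁻¹:ℝ) := by
    rw [← Real.mul_rpow hab.le (by positivity)]
    congr 1
    field_simp
  have e2 : b ^ (p⁻¹:ℝ) = (a+b) ^ (p⁻¹:ℝ) * (b/(a+b)) ^ (p⁻¹:ℝ) := by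
    rw [← Real.mul_rpow hab.le (by positivity)]
    congr 1
    field_simp
  have hsum : p⁻¹ * (a/(a+b)) + (1 - p⁻¹) * (1 - t) + (p⁻¹ * (b/(a+b)) + (1 - p⁻¹) * t) = 1 := by
    field_simp
    ring
  have hcpos : (0:ℝ) ≤ (a+b) ^ (p⁻¹:ℝ) := by positivity
  calc (1 - t) ^ (1 - p⁻¹) * a ^ (p⁻¹:ℝ) + t ^ (1 - p⁻¹) * b ^ (p⁻¹:ℝ)
      = (a+b)^(p⁻¹:ℝ) * ((a/(a+b))^(p⁻¹:ℝ) * (1-t)^(1-p⁻¹) + (b/(a+b))^(p⁻¹:ℝ) * t^(1-p⁻¹)) := by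
        rw [e1, e2]; ring
    _ ≤ (a+b)^(p⁻¹:ℝ) * 1 := by
        refine mul_le_mul_of_nonneg_left ?_ hcpos
        exact le_trans (add_le_add h1 h2) (le_of_eq hsum)
    _ = (a+b)^(p⁻¹:ℝ) := mul_one _

lemma sum_eq_holder {p : ℝ} (hp : 1 ≤ p) {a b : ℝ} (ha : 0 < a) (hb : 0 < b) :
    (1 - b/(a+b)) ^ (1 - p⁻¹) * a ^ (p⁻¹:ℝ) + (b/(a+b)) ^ (1 - p⁻¹) * b ^ (p⁻¹:ℝ)
      = (a+b) ^ (p⁻¹:ℝ) := by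
  have hab : 0 < a + b := by linarith
  have h1 : 1 - b/(a+b) = a/(a+b) := by field_simp; ring
  have key : ∀ x : ℝ, 0 < x → (x/(a+b)) ^ (1 - p⁻¹) * x ^ (p⁻¹:ℝ) = x * (a+b) ^ (p⁻¹ - 1) := by
    intro x hx
    rw [Real.div_rpow hx.le hab.le, div_mul_eq_mul_div, ← Real.rpow_add hx,
      show 1 - p⁻¹ + p⁻¹ = 1 by ring, Real.rpow_one,
      show p⁻¹ - 1 = -(1 - p⁻¹) by ring, Real.rpow_neg hab.le, div_eq_mul_inv]
  rw [h1, key a ha, key b hb, ← add_mul]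
  nth_rewrite 1 [← Real.rpow_one (a+b)]
  rw [← Real.rpow_add hab]
  norm_num

lemma fsupp_lpScale {n : ℕ} {p : ℝ} (hp : 0 < p) {a : ℝ} (ha : 0 < a) (s : ℝ) (g : En n → ℝ) :
    fsupp (lpScale p s a g) = (a ^ (p⁻¹ : ℝ)) • fsupp g := by
  have hc : (a : ℝ) ^ (p⁻¹:ℝ) ≠ 0 := (Real.rpow_pos_of_pos ha _).ne'
  have hinv : a ^ (-p⁻¹ : ℝ) = (a ^ (p⁻¹:ℝ))⁻¹ := Real.rpow_neg ha.le _
  have hsupp : Function.support (lpScale p s a g) = (a ^ (p⁻¹:ℝ)) • Function.support g := by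
    ext x
    simp only [lpScale, Function.mem_support, mul_ne_zero_iff]
    rw [mem_smul_set_iff_inv_smul_mem₀ hc, Function.mem_support, ← hinv]
    constructor
    · rintro ⟨-, h⟩; exact h
    · intro h; exact ⟨(Real.rpow_pos_of_pos ha _).ne', h⟩
  rw [fsupp, hsupp, closure_smul₀]
  rfl

lemma smul_mem_of_le {n : ℕ} {K : Set (En n)} (hK : Convex ℝ K) (h0 : (0:En n) ∈ K)
    {x y : En n} (hx : x ∈ K) (hy : y ∈ K) {A B c : ℝ}
    (hA : 0 ≤ A) (hB : 0 ≤ B) (hc : 0 < c) (hABc : A + B ≤ c) :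
    A • x + B • y ∈ c • K := by
  by_cases hm : A + B = 0
  · have hA0 : A = 0 := by linarith
    have hB0 : B = 0 := by linarith
    rw [hA0, hB0, zero_smul, zero_smul, add_zero]
    exact Set.mem_smul_set.mpr ⟨0, h0, smul_zero c⟩
  · have hm0 : 0 < A + B := lt_of_le_of_ne (add_nonneg hA hB) (Ne.symm hm)
    have hu : (A/(A+B)) • x + (B/(A+B)) • y ∈ K :=
      hK hx hy (by positivity) (by positivity) (by field_simp)
    have hv : ((A+B)/c) • ((A/(A+B)) • x + (B/(A+B)) • y) + (1 - (A+B)/c) • (0:En n) ∈ K :=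
      hK hu h0 (by positivity) (by
        have : (A+B)/c ≤ 1 := (div_le_one hc).mpr hABc
        linarith) (by ring)
    refine Set.mem_smul_set.mpr ⟨_, hv, ?_⟩
    match_scalars <;> field_simp

lemma MAdd_Mp_eq {n : ℕ} {p : ℝ} (hp : 1 ≤ p) {K : Set (En n)} (hK : Convex ℝ K)
    (h0 : (0:En n) ∈ K) {a b : ℝ} (ha : 0 < a) (hb : 0 < b) :
    MAdd (Mp p) ((a ^ (p⁻¹:ℝ)) • K) ((b ^ (p⁻¹:ℝ)) • K) = ((a+b) ^ (p⁻¹:ℝ)) • K := by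
  have hab : 0 < a + b := by linarith
  apply Set.Subset.antisymm
  · rintro z ⟨ab, ⟨t, ⟨ht0, ht1⟩, rfl⟩, x', ⟨x, hx, rfl⟩, y', ⟨y, hy, rfl⟩, rfl⟩
    simp only [smul_smul]
    exact smul_mem_of_le hK h0 hx hy
      (mul_nonneg (Real.rpow_nonneg (by linarith) _) (Real.rpow_nonneg ha.le _))
      (mul_nonneg (Real.rpow_nonneg ht0 _) (Real.rpow_nonneg hb.le _))
      (Real.rpow_pos_of_pos hab _) (holder_ineq hp ht0 ht1 ha hb)
  · rintro z ⟨w, hw, rfl⟩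
    refine ⟨((1 - b/(a+b)) ^ (1-p⁻¹), (b/(a+b)) ^ (1-p⁻¹)),
      ⟨b/(a+b), ⟨by positivity, by rw [div_le_one hab]; linarith⟩, rfl⟩,
      (a ^ (p⁻¹:ℝ)) • w, Set.smul_mem_smul_set hw,
      (b ^ (p⁻¹:ℝ)) • w, Set.smul_mem_smul_set hw, ?_⟩
    simp only [smul_smul]
    rw [← add_smul, sum_eq_holder hp ha hb]

set_option maxHeartbeats 2000000 in
lemma oplus_scale_eq {n : ℕ} {p : ℝ} (hp : 1 ≤ p) {s : ℕ} (hs : 0 < s)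
    (g : En n → ℝ) (hg0 : ∀ x, 0 ≤ g x) (hgconc : IsSConcave (s:ℝ) g)
    (hgo : (0:En n) ∈ fsupp g) {a b : ℝ} (ha : 0 < a) (hb : 0 < b) :
    oplusP p (s:ℝ) (lpScale p (s:ℝ) a g) (lpScale p (s:ℝ) b g) = lpScale p (s:ℝ) (a+b) g := by
  have hp0 : 0 < p := lt_of_lt_of_le one_pos hp
  have hab : 0 < a + b := by linarith
  have hs0 : ((s:ℝ)) ≠ 0 := Nat.cast_ne_zero.mpr hs.ne'
  have hsnn : (0:ℝ) ≤ (s:ℝ) := Nat.cast_nonneg s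
  have hK : Convex ℝ (fsupp g) := hgconc.2.2.1
  have hφ : ConcaveOn ℝ (fsupp g) (fun x => g x ^ ((s:ℝ))⁻¹) := hgconc.2.2.2
  have hgK : ∀ x, x ∉ fsupp g → g x = 0 := by
    intro x hx
    by_contra h
    exact hx (subset_closure (by simpa [Function.mem_support] using h))
  have hsm : ∀ c : ℝ, 0 < c → ∀ x : En n, (c ^ (-p⁻¹:ℝ)) • ((c ^ (p⁻¹:ℝ)) • x) = x := by
    intro c hc x
    rw [smul_smul, ← Real.rpow_add hc]
    norm_num
  have heval : ∀ c : ℝ, 0 < c → ∀ x : En n,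
      (lpScale p (s:ℝ) c g ((c ^ (p⁻¹:ℝ)) • x)) ^ ((s:ℝ))⁻¹
        = c ^ (p⁻¹:ℝ) * (g x) ^ ((s:ℝ))⁻¹ := by
    intro c hc x
    simp only [lpScale]
    rw [hsm c hc x, Real.mul_rpow (Real.rpow_nonneg hc.le _) (hg0 x), ← Real.rpow_mul hc.le]
    congr 2
    field_simp
  funext z
  simp only [oplusP, oplusM]
  rw [fsupp_lpScale hp0 ha (s:ℝ) g, fsupp_lpScale hp0 hb (s:ℝ) g, MAdd_Mp_eq hp hK hgo ha hb]
  split_ifs with hz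
  · obtain ⟨w, hw, rfl⟩ := hz
    have hrhs : lpScale p (s:ℝ) (a+b) g (((a+b) ^ (p⁻¹:ℝ)) • w) = (a+b) ^ ((s:ℝ)/p) * g w := by
      simp only [lpScale]
      rw [hsm (a+b) hab w]
    rw [hrhs]
    have hcpos : (0:ℝ) < (a+b) ^ (p⁻¹:ℝ) := Real.rpow_pos_of_pos hab _
    have hφ0 : ∀ x : En n, (0:ℝ) ≤ g x ^ ((s:ℝ))⁻¹ := fun x => Real.rpow_nonneg (hg0 x) _
    have hTs : ((a+b) ^ (p⁻¹:ℝ) * (g w) ^ ((s:ℝ))⁻¹) ^ (s:ℝ) = (a+b) ^ ((s:ℝ)/p) * g w := by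
      rw [Real.mul_rpow hcpos.le (hφ0 w), Real.rpow_inv_rpow (hg0 w) hs0,
        ← Real.rpow_mul hab.le]
      congr 2
      field_simp
    -- the distinguished element
    have hmem : (a+b) ^ ((s:ℝ)/p) * g w ∈
        {r | ∃ ab ∈ Mp p, ∃ x ∈ (a ^ (p⁻¹:ℝ)) • fsupp g, ∃ y ∈ (b ^ (p⁻¹:ℝ)) • fsupp g,
          ((a+b) ^ (p⁻¹:ℝ)) • w = ab.1 • x + ab.2 • y ∧
          r = (ab.1 * lpScale p (s:ℝ) a g x ^ ((s:ℝ))⁻¹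
              + ab.2 * lpScale p (s:ℝ) b g y ^ ((s:ℝ))⁻¹) ^ (s:ℝ)} := by
      refine ⟨((1 - b/(a+b)) ^ (1-p⁻¹), (b/(a+b)) ^ (1-p⁻¹)),
        ⟨b/(a+b), ⟨by positivity, by rw [div_le_one hab]; linarith⟩, rfl⟩,
        (a ^ (p⁻¹:ℝ)) • w, Set.smul_mem_smul_set hw,
        (b ^ (p⁻¹:ℝ)) • w, Set.smul_mem_smul_set hw, ?_, ?_⟩
      · simp only [smul_smul]
        rw [← add_smul, sum_eq_holder hp ha hb]
      · rw [heval a ha w, heval b hb w, ← hTs]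
        congr 1
        rw [← sum_eq_holder hp ha hb]
        ring
    have hub : ∀ r ∈
        {r | ∃ ab ∈ Mp p, ∃ x ∈ (a ^ (p⁻¹:ℝ)) • fsupp g, ∃ y ∈ (b ^ (p⁻¹:ℝ)) • fsupp g,
          ((a+b) ^ (p⁻¹:ℝ)) • w = ab.1 • x + ab.2 • y ∧
          r = (ab.1 * lpScale p (s:ℝ) a g x ^ ((s:ℝ))⁻¹
              + ab.2 * lpScale p (s:ℝ) b g y ^ ((s:ℝ))⁻¹) ^ (s:ℝ)},
        r ≤ (a+b) ^ ((s:ℝ)/p) * g w := by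
      rintro r ⟨ab, ⟨t, ⟨ht0, ht1⟩, rfl⟩, x', ⟨x, hx, rfl⟩, y', ⟨y, hy, rfl⟩, hzeq, rfl⟩
      simp only at hzeq ⊢
      rw [heval a ha x, heval b hb y]
      rw [← hTs]
      simp only [← mul_assoc]
      set A := (1-t)^(1-p⁻¹) * a^(p⁻¹:ℝ) with hA
      set B := t^(1-p⁻¹) * b^(p⁻¹:ℝ) with hB
      have hAn : 0 ≤ A := mul_nonneg (Real.rpow_nonneg (by linarith) _) (Real.rpow_nonneg ha.le _)
      have hBn : 0 ≤ B := mul_nonneg (Real.rpow_nonneg ht0 _) (Real.rpow_nonneg hb.le _)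
      have hABc : A + B ≤ (a+b) ^ (p⁻¹:ℝ) := holder_ineq hp ht0 ht1 ha hb
      have hzeq' : ((a+b) ^ (p⁻¹:ℝ)) • w = A • x + B • y := by
        rw [hzeq, smul_smul, smul_smul]
      have hkey : A * g x ^ ((s:ℝ))⁻¹ + B * g y ^ ((s:ℝ))⁻¹
          ≤ (a+b) ^ (p⁻¹:ℝ) * g w ^ ((s:ℝ))⁻¹ := by
        by_cases hm : A + B = 0
        · have hA0 : A = 0 := by linarith
          have hB0 : B = 0 := by linarith
          rw [hA0, hB0, zero_mul, zero_mul, add_zero]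
          exact mul_nonneg hcpos.le (hφ0 w)
        · have hm0 : 0 < A + B := lt_of_le_of_ne (add_nonneg hAn hBn) (Ne.symm hm)
          set m := A + B with hmdef
          set u := (A/m) • x + (B/m) • y with hudef
          have hsum1 : A/m + B/m = 1 := by rw [← add_div, div_self hm0.ne']
          have hu : u ∈ fsupp g := hK hx hy (div_nonneg hAn hm0.le) (div_nonneg hBn hm0.le) hsum1
          have h1 : (A/m) * g x ^ ((s:ℝ))⁻¹ + (B/m) * g y ^ ((s:ℝ))⁻¹ ≤ g u ^ ((s:ℝ))⁻¹ := by
            have := hφ.2 hx hy (div_nonneg hAn hm0.le) (div_nonneg hBn hm0.le) hsum1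
            simpa [smul_eq_mul] using this
          have hmc : m ≤ (a+b) ^ (p⁻¹:ℝ) := hABc
          have hw' : w = ((m / (a+b)^(p⁻¹:ℝ))) • u + (1 - m / (a+b)^(p⁻¹:ℝ)) • (0:En n) := by
            have hcw : ((a+b) ^ (p⁻¹:ℝ)) • w = m • u := by
              rw [hzeq', hudef, smul_add, smul_smul, smul_smul,
                mul_div_cancel₀ _ hm0.ne', mul_div_cancel₀ _ hm0.ne']
            calc w = ((a+b)^(p⁻¹:ℝ))⁻¹ • (((a+b) ^ (p⁻¹:ℝ)) • w) := by
                  rw [smul_smul, inv_mul_cancel₀ hcpos.ne', one_smul]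
              _ = ((m / (a+b)^(p⁻¹:ℝ))) • u + (1 - m / (a+b)^(p⁻¹:ℝ)) • (0:En n) := by
                  rw [hcw, smul_smul, smul_zero, add_zero, inv_mul_eq_div]
          have h2 : (m / (a+b)^(p⁻¹:ℝ)) * g u ^ ((s:ℝ))⁻¹
              + (1 - m / (a+b)^(p⁻¹:ℝ)) * g 0 ^ ((s:ℝ))⁻¹ ≤ g w ^ ((s:ℝ))⁻¹ := by
            have hwnn : (0:ℝ) ≤ m / (a+b)^(p⁻¹:ℝ) := div_nonneg hm0.le hcpos.le
            have hw1 : m / (a+b)^(p⁻¹:ℝ) ≤ 1 := (div_le_one hcpos).mpr hmc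
            have := hφ.2 hu hgo hwnn (by linarith : (0:ℝ) ≤ 1 - m / (a+b)^(p⁻¹:ℝ))
              (by ring : m / (a+b)^(p⁻¹:ℝ) + (1 - m / (a+b)^(p⁻¹:ℝ)) = 1)
            rw [← hw'] at this
            simpa [smul_eq_mul] using this
          have e3 : m * ((A/m) * g x ^ ((s:ℝ))⁻¹ + (B/m) * g y ^ ((s:ℝ))⁻¹)
              = A * g x ^ ((s:ℝ))⁻¹ + B * g y ^ ((s:ℝ))⁻¹ := by
            field_simp
          calc A * g x ^ ((s:ℝ))⁻¹ + B * g y ^ ((s:ℝ))⁻¹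
              = m * ((A/m) * g x ^ ((s:ℝ))⁻¹ + (B/m) * g y ^ ((s:ℝ))⁻¹) := e3.symm
            _ ≤ m * (g u ^ ((s:ℝ))⁻¹) := mul_le_mul_of_nonneg_left h1 hm0.le
            _ = (a+b)^(p⁻¹:ℝ) * ((m / (a+b)^(p⁻¹:ℝ)) * g u ^ ((s:ℝ))⁻¹) := by
                field_simp
            _ ≤ (a+b)^(p⁻¹:ℝ) * ((m / (a+b)^(p⁻¹:ℝ)) * g u ^ ((s:ℝ))⁻¹
                + (1 - m / (a+b)^(p⁻¹:ℝ)) * g 0 ^ ((s:ℝ))⁻¹) := by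
                have hw1 : m / (a+b)^(p⁻¹:ℝ) ≤ 1 := (div_le_one hcpos).mpr hmc
                have h4 : 0 ≤ (1 - m / (a+b)^(p⁻¹:ℝ)) * g 0 ^ ((s:ℝ))⁻¹ :=
                  mul_nonneg (by linarith) (hφ0 0)
                exact mul_le_mul_of_nonneg_left (le_add_of_nonneg_right h4) hcpos.le
            _ ≤ (a+b)^(p⁻¹:ℝ) * g w ^ ((s:ℝ))⁻¹ := mul_le_mul_of_nonneg_left h2 hcpos.le
      have hin0 : 0 ≤ A * g x ^ ((s:ℝ))⁻¹ + B * g y ^ ((s:ℝ))⁻¹ :=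
        add_nonneg (mul_nonneg hAn (hφ0 x)) (mul_nonneg hBn (hφ0 y))
      exact Real.rpow_le_rpow hin0 hkey hsnn
    exact le_antisymm (csSup_le ⟨_, hmem⟩ hub)
      (le_csSup ⟨(a+b) ^ ((s:ℝ)/p) * g w, hub⟩ hmem)
  · have hnot : (a+b) ^ (-p⁻¹:ℝ) • z ∉ fsupp g := by
      intro h
      refine hz ⟨_, h, ?_⟩
      show ((a+b) ^ (p⁻¹:ℝ)) • ((a+b) ^ (-p⁻¹:ℝ) • z) = z
      rw [smul_smul, ← Real.rpow_add hab]
      norm_num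
    simp only [lpScale]
    rw [hgK _ hnot, mul_zero]

lemma integral_lpScale {n : ℕ} {p : ℝ} (hp : 1 ≤ p) (s : ℕ) {a : ℝ} (ha : 0 < a)
    (g : En n → ℝ) :
    ∫ x, lpScale p (s:ℝ) a g x = a ^ (((n:ℝ) + s)/p) * ∫ x, g x := by
  have hp0 : 0 < p := lt_of_lt_of_le one_pos hp
  simp only [lpScale]
  rw [integral_const_mul,
    MeasureTheory.Measure.integral_comp_smul_of_nonneg (μ := volume) g (a ^ (-p⁻¹:ℝ))
      (hR := Real.rpow_nonneg ha.le _),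
    finrank_euclideanSpace_fin, smul_eq_mul, ← mul_assoc]
  congr 1
  rw [← Real.rpow_natCast (a ^ (-p⁻¹:ℝ)) n, ← Real.rpow_mul ha.le, ← Real.rpow_neg ha.le,
    ← Real.rpow_add ha]
  congr 1
  field_simp
  ring


/-- Equality case of the functional `L_p` Minkowski inequality: for `s`-concave `g`
with support having nonempty interior and containing the origin, and `f = λ ×_{p,s} g`,
the limit defining `S̃_{p,s}(f;g)` exists and
`S̃_{p,s}(f;g) = (∫f)^{1-p/(n+s)} (∫g)^{p/(n+s)} = λ^{(n+s)/p - 1} ∫ g`. -/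
theorem functional_lp_minkowski_equality {n : ℕ} (p : ℝ) (s : ℕ) (l : ℝ)
    (hp : 1 ≤ p) (hs : 0 < s) (hl : 0 < l)
    (g : En n → ℝ) (hg0 : ∀ x, 0 ≤ g x) (hgi : MeasureTheory.Integrable g)
    (hgconc : IsSConcave (s : ℝ) g)
    (hgint : (interior (fsupp g)).Nonempty) (hgo : (0 : En n) ∈ fsupp g)
    (f : En n → ℝ) (hf : f = lpScale p (s : ℝ) l g) :
    ∃ L : ℝ,
      Filter.Tendsto
        (fun ε : ℝ => ((∫ z, oplusP p (s : ℝ) f (lpScale p (s : ℝ) ε g) z) - ∫ x, f x) / ε)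
        (nhdsWithin 0 (Set.Ioi 0)) (nhds L) ∧
      (p / ((n : ℝ) + (s : ℝ))) * L
        = (∫ x, f x) ^ (1 - p / ((n : ℝ) + (s : ℝ))) * (∫ x, g x) ^ (p / ((n : ℝ) + (s : ℝ))) ∧
      (p / ((n : ℝ) + (s : ℝ))) * L = l ^ (((n : ℝ) + (s : ℝ)) / p - 1) * ∫ x, g x := by
  have hp0 : 0 < p := lt_of_lt_of_le one_pos hp
  have hns : (0:ℝ) < (n:ℝ) + s := by
    have : (0:ℝ) < (s:ℝ) := by exact_mod_cast hs
    positivity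
  set γ := ((n:ℝ) + s)/p with hγ
  set G := ∫ x, g x with hG
  have hG0 : 0 ≤ G := integral_nonneg hg0
  have hkey : ∀ ε : ℝ, 0 < ε →
      (∫ z, oplusP p (s:ℝ) f (lpScale p (s:ℝ) ε g) z) = (l+ε) ^ γ * G := by
    intro ε hε
    rw [hf, oplus_scale_eq hp hs g hg0 hgconc hgo hl hε, integral_lpScale hp s (by linarith) g]
  have hfint : (∫ x, f x) = l ^ γ * G := by
    rw [hf, integral_lpScale hp s hl g]
  have hpne : p ≠ 0 := hp0.ne'
  have hnsne : ((n:ℝ) + s) ≠ 0 := hns.ne'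
  have h3 : p/((n:ℝ)+s) * γ = 1 := by
    rw [hγ]; field_simp
  have hα : 0 < p/((n:ℝ)+s) := by positivity
  refine ⟨γ * l ^ (γ - 1) * G, ?_, ?_, ?_⟩
  · have h1 : HasDerivAt (fun ε : ℝ => l + ε) 1 0 := by
      simpa using (hasDerivAt_id (0:ℝ)).const_add l
    have h2 : HasDerivAt (fun x : ℝ => x ^ γ) (γ * (l + 0) ^ (γ-1)) (l + 0) :=
      Real.hasDerivAt_rpow_const (Or.inl (by positivity))
    have h3' : HasDerivAt (fun ε : ℝ => (l + ε) ^ γ * G) (γ * l ^ (γ-1) * G) 0 := by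
      have := (h2.comp 0 h1).mul_const G
      simpa [Function.comp] using this
    have hslope := hasDerivAt_iff_tendsto_slope.mp h3'
    have hmono : nhdsWithin (0:ℝ) (Set.Ioi 0) ≤ nhdsWithin (0:ℝ) {(0:ℝ)}ᶜ :=
      nhdsWithin_mono 0 (fun x hx => ne_of_gt hx)
    refine Filter.Tendsto.congr' ?_ (hslope.mono_left hmono)
    filter_upwards [self_mem_nhdsWithin] with ε (hε : ε ∈ Set.Ioi (0:ℝ))
    rw [slope_def_field, hkey ε hε, hfint, sub_zero, add_zero]
  · have LHSsimp : p / ((n:ℝ)+s) * (γ * l ^ (γ-1) * G) = l^(γ-1) * G := by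
      rw [show p/((n:ℝ)+s) * (γ * l^(γ-1) * G) = (p/((n:ℝ)+s) * γ) * (l^(γ-1) * G) by ring,
        h3, one_mul]
    rw [LHSsimp, hfint]
    rcases hG0.eq_or_lt with hG0' | hGpos
    · rw [← hG0']
      simp [Real.zero_rpow hα.ne']
    · rw [Real.mul_rpow (Real.rpow_nonneg hl.le _) hGpos.le, mul_assoc,
        ← Real.rpow_add hGpos, ← Real.rpow_mul hl.le,
        show (1 - p/((n:ℝ)+s)) + p/((n:ℝ)+s) = 1 by ring, Real.rpow_one,
        show γ * (1 - p/((n:ℝ)+s)) = γ - 1 by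
          rw [hγ]; field_simp]
  · rw [show p/((n:ℝ)+s) * (γ * l^(γ-1) * G) = (p/((n:ℝ)+s) * γ) * (l^(γ-1) * G) by ring,
      h3, one_mul, hγ]

end
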